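/- arXiv:0908.2494 — 3 statements merged into one kernel-verified Lean document; each statement's English description precedes it below -/
import Mathlib

section
/- Let 0 ≤ p ≤ 1/2 and let s be a positive integer. Then the binomial tail satisfies Σ_{q=⌈s/2⌉}^{s} C(s,q)·p^q·(1−p)^{s−q} ≤ (2·√(p(1−p)))^s. -/
theorem stmt_4 (p : ℝ) (hp0 : 0 ≤ p) (hp : p ≤ 1 / 2) (s : ℕ) (hs : 0 < s) :
    ∑ q ∈ Finset.Icc ((s + 1) / 2) s,
        (s.choose q : ℝ) * p ^ q * (1 - p) ^ (s - q)
      ≤ (2 * Real.sqrt (p * (1 - p))) ^ s := by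
  have h1p : 0 ≤ 1 - p := by linarith
  have hpq : 0 ≤ p * (1 - p) := mul_nonneg hp0 h1p
  have hsqnn : 0 ≤ Real.sqrt (p * (1 - p)) := Real.sqrt_nonneg _
  have hps : p ≤ Real.sqrt (p * (1 - p)) := by
    nth_rewrite 1 [show p = Real.sqrt (p * p) from (Real.sqrt_mul_self hp0).symm]
    exact Real.sqrt_le_sqrt (by nlinarith)
  have hsq2 : Real.sqrt (p * (1 - p)) ^ 2 = p * (1 - p) := Real.sq_sqrt hpq
  have hkey : ∀ q ∈ Finset.Icc ((s + 1) / 2) s,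
      (s.choose q : ℝ) * p ^ q * (1 - p) ^ (s - q)
        ≤ (s.choose q : ℝ) * Real.sqrt (p * (1 - p)) ^ s := by
    intro q hq
    rw [Finset.mem_Icc] at hq
    have hqs : q ≤ s := hq.2
    have hq2 : s ≤ 2 * q := by omega
    have hq' : q = (s - q) + (2 * q - s) := by omega
    have hterm : p ^ q * (1 - p) ^ (s - q) ≤ Real.sqrt (p * (1 - p)) ^ s := by
      calc p ^ q * (1 - p) ^ (s - q)
          = (p * (1 - p)) ^ (s - q) * p ^ (2 * q - s) := by
            rw [mul_pow]; nth_rewrite 1 [hq']; rw [pow_add]; ring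
        _ ≤ (Real.sqrt (p * (1 - p)) ^ 2) ^ (s - q) *
              Real.sqrt (p * (1 - p)) ^ (2 * q - s) := by
            rw [hsq2]; gcongr
        _ = Real.sqrt (p * (1 - p)) ^ s := by
            rw [← pow_mul, ← pow_add]; congr 1; omega
    rw [mul_assoc]
    exact mul_le_mul_of_nonneg_left hterm (Nat.cast_nonneg _)
  calc ∑ q ∈ Finset.Icc ((s + 1) / 2) s,
          (s.choose q : ℝ) * p ^ q * (1 - p) ^ (s - q)
      ≤ ∑ q ∈ Finset.Icc ((s + 1) / 2) s,
          (s.choose q : ℝ) * Real.sqrt (p * (1 - p)) ^ s :=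
        Finset.sum_le_sum hkey
    _ = (∑ q ∈ Finset.Icc ((s + 1) / 2) s, (s.choose q : ℝ)) *
          Real.sqrt (p * (1 - p)) ^ s := by rw [← Finset.sum_mul]
    _ ≤ (2 : ℝ) ^ s * Real.sqrt (p * (1 - p)) ^ s := by
        gcongr ?_ * _
        have : ∑ q ∈ Finset.Icc ((s + 1) / 2) s, s.choose q ≤ 2 ^ s := by
          calc ∑ q ∈ Finset.Icc ((s + 1) / 2) s, s.choose q
              ≤ ∑ q ∈ Finset.range (s + 1), s.choose q := by
                apply Finset.sum_le_sum_of_subset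
                intro x hx
                rw [Finset.mem_Icc] at hx
                rw [Finset.mem_range]; omega
            _ = 2 ^ s := Nat.sum_range_choose s
        calc (∑ q ∈ Finset.Icc ((s + 1) / 2) s, (s.choose q : ℝ))
            = ((∑ q ∈ Finset.Icc ((s + 1) / 2) s, s.choose q : ℕ) : ℝ) := by
              push_cast; ring
          _ ≤ ((2 ^ s : ℕ) : ℝ) := by exact_mod_cast this
          _ = (2 : ℝ) ^ s := by push_cast; ring
    _ = (2 * Real.sqrt (p * (1 - p))) ^ s := (mul_pow _ _ _).symm
end

section
/- Let 0 < p ≤ 1/2 and let s be a positive integer. Then Σ_{q=⌈s/2⌉}^{s} C(s,q)·p^q·(1−p)^{s−q} ≥ (1/(4(s+1)))·√(p/(1−p))·(2√(p(1−p)))^s. -/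
lemma central_choose_lb (s : ℕ) : 2 ^ s ≤ (s + 1) * s.choose ((s + 1) / 2) := by
  have h1 : s.choose ((s + 1) / 2) = s.choose (s / 2) := by
    have : (s + 1) / 2 = s - s / 2 := by omega
    rw [this, Nat.choose_symm (Nat.div_le_self s 2)]
  rw [h1]
  calc 2 ^ s = ∑ i ∈ Finset.range (s + 1), s.choose i := (Nat.sum_range_choose s).symm
    _ ≤ ∑ _i ∈ Finset.range (s + 1), s.choose (s / 2) := by
        apply Finset.sum_le_sum
        intro i _
        exact Nat.choose_le_middle i s
    _ = (s + 1) * s.choose (s / 2) := by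
        rw [Finset.sum_const, Finset.card_range, smul_eq_mul]

theorem stmt_5 (p : ℝ) (hp0 : 0 < p) (hp : p ≤ 1 / 2) (s : ℕ) (hs : 0 < s) :
    (1 / (4 * ((s : ℝ) + 1))) * Real.sqrt (p / (1 - p)) *
        (2 * Real.sqrt (p * (1 - p))) ^ s
      ≤ ∑ q ∈ Finset.Icc ((s + 1) / 2) s,
          (s.choose q : ℝ) * p ^ q * (1 - p) ^ (s - q) := by
  have h1p : 0 < 1 - p := by linarith
  set Q := (s + 1) / 2 with hQ
  have hqs : Q ≤ s := by omega
  have hc : (2 : ℝ) ^ s ≤ ((s : ℝ) + 1) * (s.choose Q : ℝ) := by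
    have := central_choose_lb s
    exact_mod_cast this
  have hc0 : (0 : ℝ) ≤ (s.choose Q : ℝ) := by positivity
  have hs1 : (0 : ℝ) < (s : ℝ) + 1 := by positivity
  have hx0 : (0 : ℝ) ≤ p * (1 - p) := by positivity
  have hsqle : Real.sqrt (p / (1 - p)) ≤ 1 :=
    Real.sqrt_le_one.mpr (by rw [div_le_one h1p]; linarith)
  have hsq0 : (0 : ℝ) ≤ Real.sqrt (p / (1 - p)) := Real.sqrt_nonneg _
  have hterm : (1 / (4 * ((s : ℝ) + 1))) * Real.sqrt (p / (1 - p)) *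
      (2 * Real.sqrt (p * (1 - p))) ^ s
      ≤ (s.choose Q : ℝ) * p ^ Q * (1 - p) ^ (s - Q) := by
    rw [mul_pow]
    rcases Nat.even_or_odd s with ⟨m, hm⟩ | ⟨m, hm⟩
    · -- s = 2m, Q = m
      have hQm : Q = m := by omega
      have hsQ : s - Q = m := by omega
      have hpow : Real.sqrt (p * (1 - p)) ^ s = (p * (1 - p)) ^ m := by
        rw [show s = 2 * m by omega, pow_mul, Real.sq_sqrt hx0]
      rw [hpow, hQm, show s - m = m by omega]
      have hxm : (0 : ℝ) ≤ (p * (1 - p)) ^ m := by positivity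
      have key : 1 / (4 * ((s : ℝ) + 1)) * Real.sqrt (p / (1 - p)) * 2 ^ s
          ≤ (s.choose Q : ℝ) := by
        rw [div_mul_eq_mul_div, div_mul_eq_mul_div, div_le_iff₀ (by positivity)]
        nlinarith [pow_pos (show (0:ℝ) < 2 by norm_num) s]
      calc 1 / (4 * ((s : ℝ) + 1)) * Real.sqrt (p / (1 - p)) * (2 ^ s * (p * (1 - p)) ^ m)
          = (1 / (4 * ((s : ℝ) + 1)) * Real.sqrt (p / (1 - p)) * 2 ^ s) * (p * (1 - p)) ^ m := by
            ring
        _ ≤ (s.choose Q : ℝ) * (p * (1 - p)) ^ m := by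
            exact mul_le_mul_of_nonneg_right key hxm
        _ = (s.choose m : ℝ) * p ^ m * (1 - p) ^ m := by rw [hQm, mul_pow]; ring
    · -- s = 2m+1, Q = m+1
      have hQm : Q = m + 1 := by omega
      have hsQ : s - Q = m := by omega
      have hpow : Real.sqrt (p * (1 - p)) ^ s =
          Real.sqrt (p * (1 - p)) * (p * (1 - p)) ^ m := by
        rw [show s = 2 * m + 1 by omega, pow_succ, pow_mul, Real.sq_sqrt hx0, mul_comm]
      have hsqp : Real.sqrt (p / (1 - p)) * Real.sqrt (p * (1 - p)) = p := by
        rw [← Real.sqrt_mul (by positivity)]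
        have : p / (1 - p) * (p * (1 - p)) = p ^ 2 := by
          field_simp
        rw [this, Real.sqrt_sq hp0.le]
      rw [hpow, hQm, show s - (m + 1) = m by omega]
      have hxm : (0 : ℝ) ≤ p * (p * (1 - p)) ^ m := by positivity
      have key : 1 / (4 * ((s : ℝ) + 1)) * 2 ^ s ≤ (s.choose Q : ℝ) := by
        rw [div_mul_eq_mul_div, div_le_iff₀ (by positivity)]
        nlinarith [pow_pos (show (0:ℝ) < 2 by norm_num) s]
      calc 1 / (4 * ((s : ℝ) + 1)) * Real.sqrt (p / (1 - p)) *
            (2 ^ s * (Real.sqrt (p * (1 - p)) * (p * (1 - p)) ^ m))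
          = (1 / (4 * ((s : ℝ) + 1)) * 2 ^ s) *
            ((Real.sqrt (p / (1 - p)) * Real.sqrt (p * (1 - p))) * (p * (1 - p)) ^ m) := by
            ring
        _ = (1 / (4 * ((s : ℝ) + 1)) * 2 ^ s) * (p * (p * (1 - p)) ^ m) := by
            rw [hsqp]
        _ ≤ (s.choose Q : ℝ) * (p * (p * (1 - p)) ^ m) := by
            exact mul_le_mul_of_nonneg_right key hxm
        _ = (s.choose (m + 1) : ℝ) * p ^ (m + 1) * (1 - p) ^ m := by
            rw [hQm, mul_pow]; ring
  refine hterm.trans (Finset.single_le_sum (f := fun q => (s.choose q : ℝ) * p ^ q * (1 - p) ^ (s - q)) ?_ ?_)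
  · intro i _; positivity
  · exact Finset.mem_Icc.mpr ⟨le_refl Q, hqs⟩
end

section
/- Let Z₁,...,Z_t be i.i.d. variables in [0,1] with mean μ ≠ d₀, weights m_i > 0 with Σ m_i = m, and β = (1/m)Σ m_i Z_i. Then for any constant c > 0 there exists a constant a > 0 (depending only on c) such that for sufficiently large m, E[exp(−c·m·(β − d₀)²)] ≤ exp(−a·(d₀−μ)²·m²/(m₁² + ... + m_t²)). -/
open MeasureTheory ProbabilityTheory

open Real in
lemma expQuad {z : ℝ} (hz : |z| ≤ 1) : Real.exp z ≤ 1 + z + z ^ 2 := by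
  have h := Real.exp_bound hz (n := 2) (by norm_num)
  have h2 : ∑ m ∈ Finset.range 2, z ^ m / m.factorial = 1 + z := by
    simp [Finset.sum_range_succ]
  rw [h2] at h
  have h4 : ((2:ℕ).succ : ℝ) / ((Nat.factorial 2 : ℝ) * (2:ℕ)) = 3/4 := by
    norm_num [Nat.factorial]
  rw [h4] at h
  have h5 := abs_le.1 h
  have hz2 : |z| ^ 2 = z ^ 2 := sq_abs z
  nlinarith [h5.2, sq_nonneg z]

lemma twoPoint {p q u : ℝ} (hp : 0 ≤ p) (hq : 0 ≤ q) (hpq : p + q = 1) :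
    p * Real.exp (-(q * u)) + q * Real.exp (p * u) ≤ Real.exp (u ^ 2) := by
  have hp1 : p ≤ 1 := by linarith
  have hq1 : q ≤ 1 := by linarith
  rcases le_or_gt |u| 1 with hu | hu
  · have h1 : Real.exp (-(q * u)) ≤ 1 + (-(q * u)) + (-(q * u)) ^ 2 := by
      apply expQuad
      rw [abs_neg, abs_mul]
      calc |q| * |u| ≤ 1 * 1 := by
            apply mul_le_mul _ hu (abs_nonneg u) zero_le_one
            rwa [abs_of_nonneg hq]
        _ = 1 := by ring
    have h2 : Real.exp (p * u) ≤ 1 + p * u + (p * u) ^ 2 := by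
      apply expQuad
      rw [abs_mul]
      calc |p| * |u| ≤ 1 * 1 := by
            apply mul_le_mul _ hu (abs_nonneg u) zero_le_one
            rwa [abs_of_nonneg hp]
        _ = 1 := by ring
    have h3 : 1 + u ^ 2 ≤ Real.exp (u ^ 2) := by
      have := Real.add_one_le_exp (u ^ 2); linarith
    have hb1 := mul_le_mul_of_nonneg_left h1 hp
    have hb2 := mul_le_mul_of_nonneg_left h2 hq
    have hpq2 : p * q ≤ 1 := by nlinarith
    have := mul_le_mul_of_nonneg_right hpq2 (sq_nonneg u)
    nlinarith [sq_nonneg u]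
  · have hub : |u| ≤ u ^ 2 := by nlinarith [abs_nonneg u, sq_abs u]
    have h1 : Real.exp (-(q * u)) ≤ Real.exp (u ^ 2) := by
      apply Real.exp_le_exp.2
      have : -(q * u) ≤ |q * u| := neg_le_abs _
      have h2 : |q * u| ≤ |u| := by
        rw [abs_mul]
        calc |q| * |u| ≤ 1 * |u| := by
              apply mul_le_mul_of_nonneg_right _ (abs_nonneg u)
              rwa [abs_of_nonneg hq]
          _ = |u| := by ring
      linarith
    have h2 : Real.exp (p * u) ≤ Real.exp (u ^ 2) := by
      apply Real.exp_le_exp.2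
      have : p * u ≤ |p * u| := le_abs_self _
      have h2 : |p * u| ≤ |u| := by
        rw [abs_mul]
        calc |p| * |u| ≤ 1 * |u| := by
              apply mul_le_mul_of_nonneg_right _ (abs_nonneg u)
              rwa [abs_of_nonneg hp]
          _ = |u| := by ring
      linarith
    calc p * Real.exp (-(q * u)) + q * Real.exp (p * u)
        ≤ p * Real.exp (u ^ 2) + q * Real.exp (u ^ 2) := by
          apply add_le_add (mul_le_mul_of_nonneg_left h1 hp)
            (mul_le_mul_of_nonneg_left h2 hq)
      _ = Real.exp (u ^ 2) := by rw [← add_mul, hpq, one_mul]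

open Real in
lemma mgf_le_of_Icc {Ω : Type} [MeasurableSpace Ω] {P : Measure Ω} [IsProbabilityMeasure P]
    {Y : Ω → ℝ} (hmeas : Measurable Y) {α b : ℝ} (hab : ∀ ω, Y ω ∈ Set.Icc α b)
    (h0 : ∫ ω, Y ω ∂P = 0) (θ : ℝ) :
    mgf Y P θ ≤ Real.exp (θ ^ 2 * (b - α) ^ 2) := by
  have hYint : Integrable Y P := by
    refine ⟨hmeas.aestronglyMeasurable, HasFiniteIntegral.of_bounded
      (C := max |α| |b|) (ae_of_all _ fun ω => ?_)⟩
    rw [Real.norm_eq_abs]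
    exact abs_le_max_abs_abs (hab ω).1 (hab ω).2
  have hα0 : α ≤ 0 := by
    have h := integral_mono (integrable_const α) hYint (fun ω => (hab ω).1)
    rwa [h0, integral_const, probReal_univ, one_smul] at h
  have hb0 : 0 ≤ b := by
    have h := integral_mono hYint (integrable_const b) (fun ω => (hab ω).2)
    rwa [h0, integral_const, probReal_univ, one_smul] at h
  rcases eq_or_lt_of_le (le_trans hα0 hb0) with heq | hw
  · have hY0 : ∀ ω, Y ω = α := fun ω => le_antisymm (heq ▸ (hab ω).2) (hab ω).1
    have hα : α = 0 := by
      rw [← h0]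
      simp [hY0]
    simp only [mgf, hY0, hα, mul_zero, Real.exp_zero, integral_const, probReal_univ,
      one_smul]
    exact Real.one_le_exp (by positivity)
  · set w : ℝ := b - α with hwdef
    have hw0 : 0 < w := by simp [hwdef]; linarith
    have hwne : b - α ≠ 0 := sub_ne_zero.2 hw.ne'
    set k1 : ℝ := (Real.exp (θ * b) - Real.exp (θ * α)) / w with hk1
    set k0 : ℝ := (b * Real.exp (θ * α) - α * Real.exp (θ * b)) / w with hk0
    have hpt : ∀ ω, Real.exp (θ * Y ω) ≤ k1 * Y ω + k0 := by
      intro ω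
      have h1 : (0:ℝ) ≤ (b - Y ω) / w := by
        apply div_nonneg _ hw0.le
        linarith [(hab ω).2]
      have h2 : (0:ℝ) ≤ (Y ω - α) / w := by
        apply div_nonneg _ hw0.le
        linarith [(hab ω).1]
      have h3 : (b - Y ω) / w + (Y ω - α) / w = 1 := by
        field_simp
        linarith
      have hc := convexOn_exp.2 (Set.mem_univ (θ * α)) (Set.mem_univ (θ * b)) h1 h2 h3
      simp only [smul_eq_mul] at hc
      have he : (b - Y ω) / w * (θ * α) + (Y ω - α) / w * (θ * b) = θ * Y ω := by
        field_simp
        ring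
      rw [he] at hc
      refine hc.trans (le_of_eq ?_)
      rw [hk1, hk0, hwdef]
      field_simp
      ring
    have hexpint : Integrable (fun ω => Real.exp (θ * Y ω)) P := by
      refine ⟨((hmeas.const_mul θ).exp).aestronglyMeasurable, HasFiniteIntegral.of_bounded
        (C := Real.exp (|θ| * max |α| |b|)) (ae_of_all _ fun ω => ?_)⟩
      rw [Real.norm_eq_abs, abs_of_pos (Real.exp_pos _)]
      apply Real.exp_le_exp.2
      calc θ * Y ω ≤ |θ * Y ω| := le_abs_self _
        _ = |θ| * |Y ω| := abs_mul _ _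
        _ ≤ |θ| * max |α| |b| := by
            apply mul_le_mul_of_nonneg_left _ (abs_nonneg θ)
            exact abs_le_max_abs_abs (hab ω).1 (hab ω).2
    have hgint : Integrable (fun ω => k1 * Y ω + k0) P :=
      (hYint.const_mul k1).add (integrable_const k0)
    have hint : mgf Y P θ ≤ k0 := by
      have h := integral_mono hexpint hgint hpt
      rw [integral_add (hYint.const_mul k1) (integrable_const k0), integral_const_mul, h0,
        integral_const, probReal_univ, one_smul, mul_zero, zero_add] at h
      exact h
    have hk0eq : k0 = (b / w) * Real.exp (-((-α / w) * (θ * w))) +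
        (-α / w) * Real.exp ((b / w) * (θ * w)) := by
      have e1 : -((-α / w) * (θ * w)) = θ * α := by field_simp
      have e2 : (b / w) * (θ * w) = θ * b := by field_simp
      rw [e1, e2, hk0]
      ring
    have htp := twoPoint (u := θ * w) (div_nonneg hb0 hw0.le)
      (div_nonneg (by linarith : (0:ℝ) ≤ -α) hw0.le)
      (by rw [hwdef]; field_simp; ring)
    rw [← hk0eq] at htp
    refine hint.trans (htp.trans (le_of_eq ?_))
    rw [mul_pow]

open Real in
set_option maxHeartbeats 1000000 in
theorem stmt_12 :
    ∀ c : ℝ, 0 < c → ∃ a : ℝ, 0 < a ∧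
      ∀ μ d₀ : ℝ, μ ≠ d₀ → ∃ M₀ : ℕ,
        ∀ (t m : ℕ) (mi : Fin t → ℕ), (∀ i, 0 < mi i) → (∑ i, mi i = m) → M₀ ≤ m →
          ∀ (Ω : Type) (_ : MeasurableSpace Ω) (P : Measure Ω), IsProbabilityMeasure P →
            ∀ Z : Fin t → Ω → ℝ, (∀ i, Measurable (Z i)) →
              iIndepFun Z P →
              (∀ i j, Measure.map (Z i) P = Measure.map (Z j) P) →
              (∀ i ω, Z i ω ∈ Set.Icc (0 : ℝ) 1) →
              (∀ i, ∫ ω, Z i ω ∂P = μ) →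
              ∫ ω, Real.exp
                  (-c * (m : ℝ) * ((1 / (m : ℝ)) * (∑ i, (mi i : ℝ) * Z i ω) - d₀) ^ 2) ∂P ≤
                Real.exp (-a * (d₀ - μ) ^ 2 * (m : ℝ) ^ 2 / ∑ i, (mi i : ℝ) ^ 2) := by
  intro c hc
  obtain ⟨a, ha_def⟩ : ∃ x : ℝ , x = min (1/8) (c/2) := ⟨_, rfl⟩
  have ha0 : 0 < a := by rw [ha_def]; exact lt_min (by norm_num) (by positivity)
  refine ⟨a, ha0, fun μ d₀ hμd => ⟨1, ?_⟩⟩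
  intro t m mi hmi hsum hm1 Ω mΩ P hP Z hZm hindep _hid hZmem hZmean
  have hm0 : (0:ℝ) < m := by exact_mod_cast hm1
  have hmne : (m:ℝ) ≠ 0 := hm0.ne'
  obtain ⟨D, hD_def⟩ : ∃ x : ℝ , x = |d₀ - μ| := ⟨_, rfl⟩
  have hD0 : 0 < D := by rw [hD_def]; exact abs_pos.2 (sub_ne_zero.2 (Ne.symm hμd))
  obtain ⟨s, hs_def⟩ : ∃ x : ℝ , x = ∑ i, (mi i : ℝ)^2 := ⟨_, rfl⟩
  have hsum' : ∑ i, (mi i : ℝ) = (m:ℝ) := by exact_mod_cast congrArg (Nat.cast : ℕ → ℝ) hsum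
  have hms : (m:ℝ) ≤ s := by
    rw [hs_def, ← hsum']
    apply Finset.sum_le_sum
    intro i _
    have h1 : (1:ℝ) ≤ (mi i : ℝ) := by exact_mod_cast hmi i
    nlinarith
  have hs0 : (0:ℝ) < s := lt_of_lt_of_le hm0 hms
  obtain ⟨A, hA_def⟩ : ∃ x : ℝ , x = 1/(4*c*(m:ℝ)) + s/(m:ℝ)^2 := ⟨_, rfl⟩
  have hA0 : 0 < A := by rw [hA_def]; positivity
  obtain ⟨l, hl_def⟩ : ∃ x : ℝ , x = D / (2*A) := ⟨_, rfl⟩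
  have hl0 : 0 < l := by rw [hl_def]; positivity
  obtain ⟨sg, hsg_def⟩ : ∃ x : ℝ , x = if d₀ < μ then 1 else -1 := ⟨_, rfl⟩
  have hsg2 : sg^2 = 1 := by
    by_cases h : d₀ < μ <;> simp [hsg_def, h]
  obtain ⟨θ, hθ_def⟩ : ∃ x : ℝ , x = -(l * sg) / m := ⟨_, rfl⟩
  have hθ2 : θ^2 = l^2/(m:ℝ)^2 := by
    rw [hθ_def, div_pow, neg_pow, mul_pow, hsg2]
    ring
  obtain ⟨Y, hY_def⟩ : ∃ x : Fin t → Ω → ℝ , x = fun i ω => (mi i : ℝ) * (Z i ω - μ) := ⟨_, rfl⟩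
  obtain ⟨S, hS_def⟩ : ∃ x : Ω → ℝ , x = fun ω => ∑ i, Y i ω := ⟨_, rfl⟩
  obtain ⟨C, hC_def⟩ : ∃ x : ℝ , x = Real.exp (l^2/(4*c*(m:ℝ)) - l*D) := ⟨_, rfl⟩
  -- pointwise bound
  have key : ∀ ω, Real.exp (-c * (m : ℝ) * ((1 / (m : ℝ)) * (∑ i, (mi i : ℝ) * Z i ω) - d₀) ^ 2)
      ≤ C * Real.exp (θ * S ω) := by
    intro ω
    obtain ⟨β, hβ_def⟩ : ∃ x : ℝ , x = (1 / (m : ℝ)) * (∑ i, (mi i : ℝ) * Z i ω) := ⟨_, rfl⟩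
    rw [← hβ_def]
    have hSω : S ω = (m:ℝ) * (β - μ) := by
      simp only [hS_def, hY_def, mul_sub, Finset.sum_sub_distrib, ← Finset.sum_mul, hsum',
        hβ_def]
      field_simp
      try ring
    have hθS : θ * S ω = -(l * sg) * (β - μ) := by
      rw [hSω, hθ_def]
      field_simp
    rw [hC_def, ← Real.exp_add]
    apply Real.exp_le_exp.2
    rw [hθS]
    have h4cm : (0:ℝ) < 4*c*(m:ℝ) := by positivity
    have h1 : l * |β - d₀| - c*(m:ℝ)*(β-d₀)^2 ≤ l^2/(4*c*(m:ℝ)) := by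
      rw [le_div_iff₀ h4cm]
      rcases abs_cases (β - d₀) with ⟨h, _⟩ | ⟨h, _⟩ <;> rw [h]
      · nlinarith [sq_nonneg (2*c*(m:ℝ)*(β-d₀) - l)]
      · nlinarith [sq_nonneg (2*c*(m:ℝ)*(β-d₀) + l)]
    have h2 : D + sg*(β-μ) ≤ |β - d₀| := by
      by_cases h : d₀ < μ
      · rw [hsg_def, hD_def]
        rw [if_pos h, abs_of_neg (by linarith : d₀ - μ < 0)]
        have := le_abs_self (β - d₀)
        linarith
      · have h' : μ < d₀ := lt_of_le_of_ne (not_lt.1 h) hμd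
        rw [hsg_def, hD_def]
        rw [if_neg h, abs_of_pos (by linarith : (0:ℝ) < d₀ - μ)]
        have := neg_le_abs (β - d₀)
        linarith
    have h3 := mul_nonneg hl0.le (sub_nonneg.2 h2)
    linarith [h1, h3]
  -- measurability and integrability
  have hZint : ∀ i, Integrable (Z i) P := fun i =>
    ⟨(hZm i).aestronglyMeasurable, HasFiniteIntegral.of_bounded (C := 1) (ae_of_all _ fun ω => by
      rw [Real.norm_eq_abs, abs_of_nonneg (hZmem i ω).1]; exact (hZmem i ω).2)⟩
  have hYmeas : ∀ i, Measurable (Y i) := by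
    intro i
    simp only [hY_def]
    exact ((hZm i).sub measurable_const).const_mul _
  have hSmeas : Measurable S := by
    rw [hS_def]
    exact Finset.measurable_sum Finset.univ (fun i _ => hYmeas i)
  have hsummeas : Measurable fun ω => ∑ i, (mi i : ℝ) * Z i ω :=
    Finset.measurable_sum Finset.univ (fun i _ => (hZm i).const_mul _)
  have hfmeas : Measurable (fun ω =>
      Real.exp (-c * (m:ℝ) * ((1/(m:ℝ)) * (∑ i, (mi i : ℝ) * Z i ω) - d₀)^2)) :=
    Real.measurable_exp.comp
      ((((hsummeas.const_mul _).sub measurable_const).pow_const 2).const_mul _)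
  have hfint : Integrable (fun ω =>
      Real.exp (-c * (m:ℝ) * ((1/(m:ℝ)) * (∑ i, (mi i : ℝ) * Z i ω) - d₀)^2)) P := by
    refine ⟨hfmeas.aestronglyMeasurable, HasFiniteIntegral.of_bounded (C := 1)
      (ae_of_all _ fun ω => ?_)⟩
    rw [Real.norm_eq_abs, abs_of_pos (Real.exp_pos _)]
    calc Real.exp (-c * (m:ℝ) * ((1/(m:ℝ)) * (∑ i, (mi i : ℝ) * Z i ω) - d₀)^2)
        ≤ Real.exp 0 := Real.exp_le_exp.2 (by
          have := mul_nonneg (mul_nonneg hc.le hm0.le)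
            (sq_nonneg ((1/(m:ℝ)) * (∑ i, (mi i : ℝ) * Z i ω) - d₀))
          nlinarith)
      _ = 1 := Real.exp_zero
  obtain ⟨B, hB_def⟩ : ∃ x : ℝ , x = ∑ i, (mi i : ℝ) * (1 + |μ|) := ⟨_, rfl⟩
  have hSbd : ∀ ω, |S ω| ≤ B := by
    intro ω
    simp only [hS_def, hB_def]
    refine (Finset.abs_sum_le_sum_abs _ _).trans (Finset.sum_le_sum fun i _ => ?_)
    simp only [hY_def]
    rw [abs_mul, abs_of_nonneg (by positivity : (0:ℝ) ≤ (mi i : ℝ))]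
    apply mul_le_mul_of_nonneg_left _ (by positivity : (0:ℝ) ≤ (mi i : ℝ))
    calc |Z i ω - μ| ≤ |Z i ω| + |μ| := abs_sub _ _
      _ ≤ 1 + |μ| := by
          have h1 := (hZmem i ω).1
          have h2 := (hZmem i ω).2
          have : |Z i ω| ≤ 1 := by rw [abs_of_nonneg h1]; exact h2
          linarith
  have hexpSint : Integrable (fun ω => Real.exp (θ * S ω)) P := by
    refine ⟨((hSmeas.const_mul θ).exp).aestronglyMeasurable, HasFiniteIntegral.of_bounded
      (C := Real.exp (|θ| * B)) (ae_of_all _ fun ω => ?_)⟩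
    rw [Real.norm_eq_abs, abs_of_pos (Real.exp_pos _)]
    apply Real.exp_le_exp.2
    calc θ * S ω ≤ |θ * S ω| := le_abs_self _
      _ = |θ| * |S ω| := abs_mul _ _
      _ ≤ |θ| * B := mul_le_mul_of_nonneg_left (hSbd ω) (abs_nonneg θ)
  have hgint : Integrable (fun ω => C * Real.exp (θ * S ω)) P := hexpSint.const_mul C
  -- independence of the Y i
  have hindep' : iIndepFun Y P := by
    rw [hY_def]
    exact hindep.comp (fun i x => (mi i : ℝ) * (x - μ))
      (fun i => (measurable_id.sub measurable_const).const_mul _)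
  have hSfun : S = ∑ i, Y i := by
    funext ω
    simp [hS_def, Finset.sum_apply]
  have hprod : mgf S P θ = ∏ i, mgf (Y i) P θ := by
    rw [hSfun]
    exact hindep'.mgf_sum hYmeas Finset.univ
  have hbound : ∀ i, mgf (Y i) P θ ≤ Real.exp (θ^2 * (mi i : ℝ)^2) := by
    intro i
    have hmem : ∀ ω, Y i ω ∈ Set.Icc ((mi i : ℝ) * (0 - μ)) ((mi i : ℝ) * (1 - μ)) := by
      intro ω
      simp only [hY_def]
      constructor
      · apply mul_le_mul_of_nonneg_left _ (by positivity : (0:ℝ) ≤ (mi i : ℝ))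
        linarith [(hZmem i ω).1]
      · apply mul_le_mul_of_nonneg_left _ (by positivity : (0:ℝ) ≤ (mi i : ℝ))
        linarith [(hZmem i ω).2]
    have hzero : ∫ ω, Y i ω ∂P = 0 := by
      simp only [hY_def]
      rw [integral_const_mul, integral_sub (hZint i) (integrable_const μ), hZmean i,
        integral_const, probReal_univ, one_smul, sub_self, mul_zero]
    have h := mgf_le_of_Icc (hYmeas i) hmem hzero θ
    have he : (mi i : ℝ)*(1-μ) - (mi i : ℝ)*(0-μ) = (mi i : ℝ) := by ring
    rwa [he] at h
  have hprodle : ∏ i, mgf (Y i) P θ ≤ Real.exp (θ^2 * s) := by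
    calc ∏ i, mgf (Y i) P θ ≤ ∏ i, Real.exp (θ^2 * (mi i : ℝ)^2) :=
          Finset.prod_le_prod (fun i _ => mgf_nonneg) (fun i _ => hbound i)
      _ = Real.exp (∑ i, θ^2 * (mi i : ℝ)^2) := (Real.exp_sum _ _).symm
      _ = Real.exp (θ^2 * s) := by rw [← Finset.mul_sum, ← hs_def]
  -- final arithmetic
  have hexp_eq : l^2/(4*c*(m:ℝ)) - l*D + θ^2*s = A*l^2 - l*D := by
    rw [hθ2, hA_def]
    field_simp
    ring
  have hval : A*l^2 - l*D = -(D^2/(4*A)) := by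
    rw [hl_def]
    field_simp
    ring
  have h4aA : 4*a*A*(m:ℝ)^2 ≤ s := by
    have ha1 : a ≤ 1/8 := by rw [ha_def]; exact min_le_left _ _
    have ha2 : a ≤ c/2 := by rw [ha_def]; exact min_le_right _ _
    have heq : 4*a*A*(m:ℝ)^2 = a*((m:ℝ)/c) + 4*a*s := by
      rw [hA_def]
      field_simp
    rw [heq]
    have e1 : a*((m:ℝ)/c) ≤ (c/2)*((m:ℝ)/c) := mul_le_mul_of_nonneg_right ha2 (by positivity)
    have e2 : (c/2)*((m:ℝ)/c) = (m:ℝ)/2 := by field_simp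
    have e3 : a*s ≤ (1/8)*s := mul_le_mul_of_nonneg_right ha1 hs0.le
    rw [e2] at e1
    linarith [hms]
  have hDsq : D^2 = (d₀-μ)^2 := by rw [hD_def]; exact sq_abs _
  have h6 : a*(d₀-μ)^2*(m:ℝ)^2/s ≤ D^2/(4*A) := by
    rw [div_le_div_iff₀ hs0 (by positivity), ← hDsq]
    nlinarith [mul_le_mul_of_nonneg_left h4aA (sq_nonneg D)]
  calc ∫ ω, Real.exp (-c * (m : ℝ) * ((1 / (m : ℝ)) * (∑ i, (mi i : ℝ) * Z i ω) - d₀) ^ 2) ∂P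
      ≤ ∫ ω, C * Real.exp (θ * S ω) ∂P := integral_mono hfint hgint key
    _ = C * mgf S P θ := by rw [integral_const_mul]; rfl
    _ ≤ C * Real.exp (θ^2 * s) := by
        have hC0 : (0:ℝ) ≤ C := by rw [hC_def]; positivity
        apply mul_le_mul_of_nonneg_left _ hC0
        rw [hprod]; exact hprodle
    _ = Real.exp (l^2/(4*c*(m:ℝ)) - l*D + θ^2*s) := by rw [hC_def, ← Real.exp_add]
    _ ≤ Real.exp (-a * (d₀ - μ) ^ 2 * (m : ℝ) ^ 2 / ∑ i, (mi i : ℝ) ^ 2) := by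
        rw [← hs_def]
        apply Real.exp_le_exp.2
        rw [hexp_eq, hval]
        have : -a * (d₀ - μ) ^ 2 * (m:ℝ) ^ 2 / s = -(a * (d₀ - μ) ^ 2 * (m:ℝ) ^ 2 / s) := by
          ring
        rw [this]
        linarith
end
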